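/- Let R = Hom(ℚ/ℤ, ℚ/ℤ) and G = {(r, ρ) ∈ ℚ₊ˣ × R : rρ ∈ R}. The map η(r, ρ) := ((r⁻¹ℤ, r⁻¹(rρ)), (ℤ, ρ)) sends every element of G to a pair of commensurable 1-dimensional ℚ-lattices, and it induces a bijection from G onto the quotient of the set of all pairs of commensurable 1-dimensional ℚ-lattices by the scaling action of ℝ₊ˣ. -/

import Mathlib

/-- The abelian group `ℚ/ℤ`;  `R := Hom(ℚ/ℤ, ℚ/ℤ)` is then `QZ →+ QZ`. -/
abbrev QZ : Type := ℚ ⧸ AddSubgroup.zmultiples (1 : ℚ)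

/-- For `λ ∈ ℝ`, the homomorphism `ℚ/ℤ → ℝ/λℤ` induced by `q ↦ λ·q`; for
`ρ : ℚ/ℤ → ℚ/ℤ` the `ℚ`-lattice `(λℤ, λρ)` has homomorphism `(scaleHom λ).comp ρ`,
i.e. `x ↦ λ·q + λℤ` where `q` is any rational representative of `ρ(x)`. -/
noncomputable def scaleHom (l : ℝ) : QZ →+ ℝ ⧸ AddSubgroup.zmultiples l :=
  QuotientAddGroup.map (AddSubgroup.zmultiples (1 : ℚ)) (AddSubgroup.zmultiples l)
    ((AddMonoidHom.mulLeft l).comp (Rat.castHom ℝ).toAddMonoidHom)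
    (by
      intro q hq
      obtain ⟨n, rfl⟩ := AddSubgroup.mem_zmultiples_iff.mp hq
      refine AddSubgroup.mem_comap.mpr (AddSubgroup.mem_zmultiples_iff.mpr ⟨n, ?_⟩)
      simp only [AddMonoidHom.comp_apply, RingHom.toAddMonoidHom_eq_coe,
        AddMonoidHom.coe_coe, AddMonoidHom.coe_mulLeft, zsmul_eq_mul]
      rw [mul_one, map_intCast]
      ring)

/-- A pair `(Λ, φ)` with `Λ` a subgroup of `ℝ` and `φ : ℚ/ℤ → ℝ/Λ` a homomorphism. -/
def PreQLat : Type := Σ Λ : AddSubgroup ℝ, QZ →+ ℝ ⧸ Λ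

/-- `(Λ, φ)` is a 1-dimensional `ℚ`-lattice: `Λ` is the `ℤ`-span of a nonzero real number
and the image of `φ` lies in `ℚΛ/Λ`. -/
def IsQLat (L : PreQLat) : Prop :=
  (∃ l : ℝ, l ≠ 0 ∧ L.1 = AddSubgroup.zmultiples l) ∧
  ∀ x : QZ,
    L.2 x ∈ (Submodule.span ℚ (L.1 : Set ℝ)).toAddSubgroup.map (QuotientAddGroup.mk' L.1)

/-- Commensurability: `ℚΛ₁ = ℚΛ₂` and `(φ₁ - φ₂)(x) ∈ Λ₁ + Λ₂` for all `x ∈ ℚ/ℤ`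
(the images of `φ₁(x)` and `φ₂(x)` in `ℝ/(Λ₁ + Λ₂)` coincide). -/
def Commensurable1 (L₁ L₂ : PreQLat) : Prop :=
  Submodule.span ℚ (L₁.1 : Set ℝ) = Submodule.span ℚ (L₂.1 : Set ℝ) ∧
  ∀ x : QZ,
    QuotientAddGroup.map L₁.1 (L₁.1 ⊔ L₂.1) (AddMonoidHom.id ℝ)
      (by rw [AddSubgroup.comap_id]; exact le_sup_left) (L₁.2 x) =
    QuotientAddGroup.map L₂.1 (L₁.1 ⊔ L₂.1) (AddMonoidHom.id ℝ)
      (by rw [AddSubgroup.comap_id]; exact le_sup_right) (L₂.2 x)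

/-- `ScaleRel c L L'` says that `L' = c·L = (cΛ, cφ)` is the scaling of `L` by `c`. -/
def ScaleRel (c : ℝ) (L L' : PreQLat) : Prop :=
  L'.1 = L.1.map (AddMonoidHom.mulLeft c) ∧
  ∃ h : L.1 ≤ L'.1.comap (AddMonoidHom.mulLeft c),
    ∀ x : QZ, L'.2 x = QuotientAddGroup.map L.1 L'.1 (AddMonoidHom.mulLeft c) h (L.2 x)

/-- For `r ∈ ℚ₊ˣ` (in lowest terms `r = num/den`) and `ρ ∈ R = Hom(ℚ/ℤ, ℚ/ℤ)`, the
condition `rρ ∈ R` with value `rρ`: `ρ = den·τ` and `rρ = num·τ` for some `τ ∈ R`. -/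
def IsRatSMul (r : ℚ) (ρ rρ : QZ →+ QZ) : Prop :=
  ∃ τ : QZ →+ QZ, ρ = r.den • τ ∧ rρ = r.num • τ

/-- The first member `(r⁻¹ℤ, r⁻¹(rρ))` of `η(r, ρ)`. -/
noncomputable def eta1 (r : ℚ) (rρ : QZ →+ QZ) : PreQLat :=
  ⟨AddSubgroup.zmultiples ((r : ℝ)⁻¹), (scaleHom ((r : ℝ)⁻¹)).comp rρ⟩

/-- The second member `(ℤ, ρ)` of `η(r, ρ)`. -/
noncomputable def eta2 (ρ : QZ →+ QZ) : PreQLat :=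
  ⟨AddSubgroup.zmultiples (1 : ℝ), (scaleHom 1).comp ρ⟩

open AddSubgroup

lemma scaleHom_mk (l : ℝ) (q : ℚ) :
    scaleHom l (QuotientAddGroup.mk q) = QuotientAddGroup.mk (l * q) := rfl

lemma map_zmult (c a : ℝ) :
    (zmultiples a).map (AddMonoidHom.mulLeft c) = zmultiples (c * a) := by
  ext x
  simp only [AddSubgroup.mem_map, mem_zmultiples_iff, AddMonoidHom.coe_mulLeft]
  constructor
  · rintro ⟨y, ⟨n, rfl⟩, rfl⟩
    exact ⟨n, by simp only [zsmul_eq_mul]; ring⟩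
  · rintro ⟨n, rfl⟩
    exact ⟨n • a, ⟨n, rfl⟩, by simp only [zsmul_eq_mul]; ring⟩

lemma zmult_neg (a : ℝ) : zmultiples (-a) = zmultiples a := by
  ext x
  simp only [mem_zmultiples_iff]
  exact ⟨fun ⟨n, h⟩ => ⟨-n, by rw [← h]; simp only [zsmul_eq_mul]; push_cast; ring⟩,
    fun ⟨n, h⟩ => ⟨-n, by rw [← h]; simp only [zsmul_eq_mul]; push_cast; ring⟩⟩

lemma zmult_inj {a b : ℝ} (ha : 0 < a) (hb : 0 < b)
    (h : zmultiples a = zmultiples b) : a = b := by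
  obtain ⟨n, hn⟩ := mem_zmultiples_iff.mp (h ▸ mem_zmultiples a)
  obtain ⟨m, hm⟩ := mem_zmultiples_iff.mp (h.symm ▸ mem_zmultiples b)
  rw [zsmul_eq_mul] at hn hm
  have hnm : ((n * m : ℤ) : ℝ) = 1 := by
    have h1 : ((n*m:ℤ):ℝ) * a = 1 * a := by push_cast; nlinarith [hn, hm]
    exact mul_right_cancel₀ ha.ne' h1
  have : n * m = 1 := by exact_mod_cast hnm
  have hn1 : n = 1 := by
    rcases Int.isUnit_iff.mp (IsUnit.of_mul_eq_one (a := n) m this) with h'|h'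
    · exact h'
    · exfalso; rw [h'] at hn; push_cast at hn; nlinarith
  rw [hn1] at hn; push_cast at hn; linarith

lemma span_zmultiples (l : ℝ) :
    Submodule.span ℚ ((zmultiples l : AddSubgroup ℝ) : Set ℝ) = Submodule.span ℚ {l} := by
  apply le_antisymm
  · rw [Submodule.span_le]
    rintro x ⟨n, rfl⟩
    have := Submodule.smul_mem (Submodule.span ℚ {l}) (n : ℚ) (Submodule.mem_span_singleton_self l)
    simpa [zsmul_eq_mul, Rat.smul_def] using this
  · exact Submodule.span_mono (by simpa using mem_zmultiples l)

lemma mem_span_zmult {l x : ℝ} : x ∈ Submodule.span ℚ ((zmultiples l : AddSubgroup ℝ) : Set ℝ)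
    ↔ ∃ q : ℚ, x = q * l := by
  rw [span_zmultiples, Submodule.mem_span_singleton]
  constructor
  · rintro ⟨q, rfl⟩; exact ⟨q, by simp [Rat.smul_def]⟩
  · rintro ⟨q, rfl⟩; exact ⟨q, by simp [Rat.smul_def]⟩

lemma scaleHom_inj {l : ℝ} (hl : l ≠ 0) : Function.Injective (scaleHom l) := by
  rw [injective_iff_map_eq_zero]
  intro x hx
  obtain ⟨q, rfl⟩ := QuotientAddGroup.mk_surjective x
  rw [scaleHom_mk] at hx
  rw [QuotientAddGroup.eq_zero_iff] at hx ⊢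
  obtain ⟨n, hn⟩ := mem_zmultiples_iff.mp hx
  rw [zsmul_eq_mul] at hn
  refine mem_zmultiples_iff.mpr ⟨n, ?_⟩
  rw [zsmul_eq_mul, mul_one]
  have hq : (q : ℝ) = (n : ℝ) := by
    have h1 : l * (n : ℝ) = l * (q : ℝ) := by linarith [hn]
    exact (mul_left_cancel₀ hl h1).symm
  exact_mod_cast hq.symm
lemma isQLat_scale (l : ℝ) (hl : l ≠ 0) (σ : QZ →+ QZ) :
    IsQLat ⟨zmultiples l, (scaleHom l).comp σ⟩ := by
  refine ⟨⟨l, hl, rfl⟩, fun x => ?_⟩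
  obtain ⟨q, hq⟩ := QuotientAddGroup.mk_surjective (σ x)
  refine AddSubgroup.mem_map.mpr ⟨l * q, ?_, ?_⟩
  · exact (Submodule.mem_toAddSubgroup _).mpr (mem_span_zmult.mpr ⟨q, (mul_comm l q).symm ▸ rfl⟩)
  · show QuotientAddGroup.mk (l * q) = (scaleHom l) (σ x)
    rw [← hq, scaleHom_mk]

lemma part1 (r : ℚ) (ρ rρ : QZ →+ QZ) (hr : 0 < r) (h : IsRatSMul r ρ rρ) :
    IsQLat (eta1 r rρ) ∧ IsQLat (eta2 ρ) ∧ Commensurable1 (eta1 r rρ) (eta2 ρ) := by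
  have hr0 : (r : ℝ) ≠ 0 := by exact_mod_cast hr.ne'
  have hri : ((r : ℝ))⁻¹ ≠ 0 := inv_ne_zero hr0
  obtain ⟨τ, hρ, hrρ⟩ := h
  refine ⟨isQLat_scale _ hri rρ, isQLat_scale _ one_ne_zero ρ, ?_, ?_⟩
  · show Submodule.span ℚ ((zmultiples ((r:ℝ))⁻¹ : AddSubgroup ℝ) : Set ℝ)
      = Submodule.span ℚ ((zmultiples (1:ℝ) : AddSubgroup ℝ) : Set ℝ)
    apply Submodule.ext
    intro x
    rw [mem_span_zmult, mem_span_zmult]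
    constructor
    · rintro ⟨q, rfl⟩; exact ⟨q * r⁻¹, by push_cast; field_simp⟩
    · rintro ⟨q, rfl⟩; exact ⟨q * r, by push_cast; field_simp⟩
  · intro x
    obtain ⟨t, ht⟩ := QuotientAddGroup.mk_surjective (τ x)
    have h1 : rρ x = QuotientAddGroup.mk ((r.num : ℚ) * t) := by
      rw [hrρ, AddMonoidHom.smul_apply, ← ht]
      rw [show ((r.num : ℚ) * t) = r.num • t by simp [zsmul_eq_mul]]
      exact (map_zsmul (QuotientAddGroup.mk' _) r.num t).symm
    have h2 : ρ x = QuotientAddGroup.mk ((r.den : ℚ) * t) := by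
      rw [hρ, AddMonoidHom.smul_apply, ← ht]
      rw [show ((r.den : ℚ) * t) = r.den • t by simp [nsmul_eq_mul]]
      exact (map_nsmul (QuotientAddGroup.mk' (zmultiples (1:ℚ))) r.den t).symm
    show QuotientAddGroup.map _ _ _ _ ((scaleHom _) (rρ x))
      = QuotientAddGroup.map _ _ _ _ ((scaleHom _) (ρ x))
    rw [h1, h2, scaleHom_mk, scaleHom_mk]
    erw [QuotientAddGroup.map_mk, QuotientAddGroup.map_mk]
    congr 1
    show ((r:ℝ))⁻¹ * ((((r.num : ℚ) * t) : ℚ) : ℝ) = 1 * ((((r.den : ℚ) * t) : ℚ) : ℝ)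
    have hd : ((r.den : ℝ)) ≠ 0 := by positivity
    have hcast : (r : ℝ) = (r.num : ℝ) / (r.den : ℝ) := by
      rw [Rat.cast_def]
    rw [hcast]
    push_cast
    have hnum : (r.num : ℝ) ≠ 0 := by
      have := Rat.num_pos.mpr hr
      positivity
    field_simp
lemma part2 (r r' : ℚ) (ρ ρ' rρ rρ' : QZ →+ QZ) (hr : 0 < r) (hr' : 0 < r')
    (hc : ∃ c : ℝ, 0 < c ∧ ScaleRel c (eta1 r rρ) (eta1 r' rρ') ∧ ScaleRel c (eta2 ρ) (eta2 ρ')) :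
    r = r' ∧ ρ = ρ' := by
  obtain ⟨c, hc0, ⟨hl1, hh1, hφ1⟩, ⟨hl2, hh2, hφ2⟩⟩ := hc
  have hc1 : c = 1 := by
    have : zmultiples (1:ℝ) = zmultiples (c * 1) := by
      rw [← map_zmult]; exact hl2
    have h := zmult_inj one_pos (by simpa using hc0) this
    rw [mul_one] at h
    exact h.symm
  subst hc1
  have hrr : r = r' := by
    have h1 : zmultiples (((r':ℚ):ℝ))⁻¹ = zmultiples (1 * ((r:ℝ))⁻¹) := by
      rw [← map_zmult]; exact hl1
    have h2 : ((r':ℝ))⁻¹ = 1 * ((r:ℝ))⁻¹ :=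
      zmult_inj (by positivity) (by positivity) h1
    rw [one_mul] at h2
    have hr0 : (r:ℝ) ≠ 0 := by positivity
    have hr'0 : (r':ℝ) ≠ 0 := by positivity
    field_simp at h2
    exact_mod_cast h2
  refine ⟨hrr, ?_⟩
  ext x
  have hx := hφ2 x
  obtain ⟨p, hp⟩ := QuotientAddGroup.mk_surjective (ρ x)
  have heq : scaleHom 1 (ρ' x) = scaleHom 1 (ρ x) := by
    have : (eta2 ρ).2 x = scaleHom 1 (ρ x) := rfl
    rw [show (eta2 ρ').2 x = scaleHom 1 (ρ' x) from rfl] at hx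
    rw [hx, this, ← hp, scaleHom_mk]
    erw [QuotientAddGroup.map_mk]
    norm_num
    rfl
  show ρ (QuotientAddGroup.mk x) = ρ' (QuotientAddGroup.mk x)
  exact (scaleHom_inj one_ne_zero heq).symm
lemma exists_rho (l : ℝ) (hl : l ≠ 0) (φ : QZ →+ ℝ ⧸ zmultiples l)
    (hφ : ∀ x, φ x ∈ (Submodule.span ℚ ((zmultiples l : AddSubgroup ℝ) : Set ℝ)).toAddSubgroup.map
      (QuotientAddGroup.mk' (zmultiples l))) :
    ∃ ρ : QZ →+ QZ, ∀ x, scaleHom l (ρ x) = φ x := by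
  have hinj := scaleHom_inj hl
  have hrange : ∀ x, φ x ∈ (scaleHom l).range := by
    intro x
    obtain ⟨y, hy, hyx⟩ := AddSubgroup.mem_map.mp (hφ x)
    obtain ⟨q, rfl⟩ := mem_span_zmult.mp ((Submodule.mem_toAddSubgroup _).mp hy)
    refine ⟨QuotientAddGroup.mk q, ?_⟩
    rw [scaleHom_mk, ← hyx, QuotientAddGroup.mk'_apply, mul_comm]
  refine ⟨((AddMonoidHom.ofInjective hinj).symm.toAddMonoidHom).comp
    (φ.codRestrict (scaleHom l).range hrange), fun x => ?_⟩
  simpa using AddMonoidHom.apply_ofInjective_symm hinj ⟨φ x, hrange x⟩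

lemma part3 (L₁ L₂ : PreQLat) (h₁ : IsQLat L₁) (h₂ : IsQLat L₂) (hc : Commensurable1 L₁ L₂) :
    ∃ (r : ℚ) (ρ rρ : QZ →+ QZ), 0 < r ∧ IsRatSMul r ρ rρ ∧
      ∃ c : ℝ, 0 < c ∧ ScaleRel c (eta1 r rρ) L₁ ∧ ScaleRel c (eta2 ρ) L₂ := by
  obtain ⟨Λ₁, φ₁⟩ := L₁
  obtain ⟨Λ₂, φ₂⟩ := L₂
  obtain ⟨l₁, hl₁, rfl⟩ : ∃ l : ℝ, 0 < l ∧ Λ₁ = zmultiples l := by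
    obtain ⟨⟨l, hl, hΛ⟩, -⟩ := h₁
    rcases hl.lt_or_gt with h'|h'
    · exact ⟨-l, by linarith, by rw [show Λ₁ = zmultiples l from hΛ]; exact (zmult_neg l).symm⟩
    · exact ⟨l, h', hΛ⟩
  obtain ⟨l₂, hl₂, rfl⟩ : ∃ l : ℝ, 0 < l ∧ Λ₂ = zmultiples l := by
    obtain ⟨⟨l, hl, hΛ⟩, -⟩ := h₂
    rcases hl.lt_or_gt with h'|h'
    · exact ⟨-l, by linarith, by rw [show Λ₂ = zmultiples l from hΛ]; exact (zmult_neg l).symm⟩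
    · exact ⟨l, h', hΛ⟩
  -- l₁ = s * l₂ for a positive rational s
  obtain ⟨s, hs⟩ : ∃ s : ℚ, l₁ = (s : ℝ) * l₂ := by
    have := hc.1
    simp only at this
    have h1 : l₁ ∈ Submodule.span ℚ ((zmultiples l₂ : AddSubgroup ℝ) : Set ℝ) := by
      rw [← this]
      exact mem_span_zmult.mpr ⟨1, by norm_num⟩
    obtain ⟨q, hq⟩ := mem_span_zmult.mp h1
    exact ⟨q, hq⟩
  have hs0 : 0 < s := by
    have : (0:ℝ) < (s:ℝ) := by
      rcases lt_trichotomy ((s:ℝ)) 0 with h'|h'|h'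
      · nlinarith
      · rw [h'] at hs; simp at hs; linarith
      · exact h'
    exact_mod_cast this
  have hsnum : 0 < s.num := Rat.num_pos.mpr hs0
  -- the rational r = den/num = s⁻¹
  set r : ℚ := (s.den : ℚ) / (s.num : ℚ) with hr_def
  have hrnum : r.num = (s.den : ℤ) := by
    rw [hr_def, show ((s.den:ℚ)) = (((s.den:ℤ)):ℚ) by push_cast; ring]
    exact Rat.num_div_eq_of_coprime hsnum (by simpa using s.reduced.symm)
  have hrden : (r.den : ℤ) = s.num := by
    rw [hr_def, show ((s.den:ℚ)) = (((s.den:ℤ)):ℚ) by push_cast; ring]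
    exact Rat.den_div_eq_of_coprime hsnum (by simpa using s.reduced.symm)
  have hr0 : 0 < r := by
    rw [hr_def]
    have h1 : (0:ℚ) < (s.den:ℚ) := by exact_mod_cast s.den_pos
    have h2 : (0:ℚ) < (s.num:ℚ) := by exact_mod_cast hsnum
    positivity
  have hrs : ((r:ℝ))⁻¹ = (s:ℝ) := by
    have : (r:ℝ) = ((s:ℝ))⁻¹ := by
      rw [hr_def]
      push_cast
      rw [show (s:ℝ) = (s.num:ℝ)/(s.den:ℝ) by rw [Rat.cast_def]]
      rw [inv_div]
    rw [this, inv_inv]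
  have hsR : (s:ℝ) ≠ 0 := by positivity
  -- build ρ and rρ
  obtain ⟨ρ, hρ⟩ := exists_rho l₂ hl₂.ne' φ₂ h₂.2
  obtain ⟨rρ, hrρ⟩ := exists_rho l₁ hl₁.ne' φ₁ h₁.2
  -- key relation  s.num • rρ = s.den • ρ
  have key : ∀ x : QZ, (s.num) • rρ x = ((s.den : ℤ)) • ρ x := by
    intro x
    obtain ⟨q, hq⟩ := QuotientAddGroup.mk_surjective (rρ x)
    obtain ⟨p, hp⟩ := QuotientAddGroup.mk_surjective (ρ x)
    have hx := hc.2 x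
    rw [← hrρ x, ← hρ x, ← hq, ← hp, scaleHom_mk, scaleHom_mk,
      QuotientAddGroup.map_mk, QuotientAddGroup.map_mk] at hx
    rw [QuotientAddGroup.eq] at hx
    obtain ⟨y, ⟨n, rfl⟩, z, ⟨m, rfl⟩, hyz⟩ := AddSubgroup.mem_sup.mp hx
    simp only [zsmul_eq_mul, AddMonoidHom.id_apply] at hyz
    -- hyz : n * l₁ + m * l₂ = -(l₁ * q) + l₂ * p
    have hrat : ((- (s * q) + p : ℚ) : ℝ) = (((n:ℚ) * s + m : ℚ) : ℝ) := by
      push_cast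
      rw [hs] at hyz
      have hl₂0 : l₂ ≠ 0 := hl₂.ne'
      have h2 : l₂ * (-((s:ℝ) * q) + p) = l₂ * ((n:ℝ) * s + m) := by
        linear_combination -hyz
      exact mul_left_cancel₀ hl₂0 h2
    have hrat' : (- (s * q) + p : ℚ) = ((n:ℚ) * s + m : ℚ) := by exact_mod_cast hrat
    -- multiply by den:  -(num*q) + den*p = n*num + m*den
    have hmul : (- ((s.num:ℚ) * q) + (s.den:ℚ) * p : ℚ) = ((n:ℚ) * s.num + (m:ℚ) * s.den : ℚ) := by
      have hd : ((s.den:ℚ)) * s = (s.num : ℚ) := by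
        rw [mul_comm]; exact Rat.mul_den_eq_num s
      calc (- ((s.num:ℚ) * q) + (s.den:ℚ) * p : ℚ)
          = (s.den:ℚ) * (- (s * q) + p) := by rw [← hd]; ring
        _ = (s.den:ℚ) * ((n:ℚ) * s + m) := by rw [hrat']
        _ = ((n:ℚ) * s.num + (m:ℚ) * s.den : ℚ) := by rw [← hd]; ring
    rw [← hq, ← hp, ← QuotientAddGroup.mk_zsmul, ← QuotientAddGroup.mk_zsmul,
      QuotientAddGroup.eq]
    refine mem_zmultiples_iff.mpr ⟨n * s.num + m * s.den, ?_⟩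
    rw [zsmul_eq_mul, mul_one, zsmul_eq_mul, zsmul_eq_mul]
    push_cast
    linarith [hmul]
  -- Bezout: τ with ρ = a•τ, rρ = b•τ
  have hcop : IsCoprime (s.num) ((s.den:ℤ)) := by
    rw [Int.isCoprime_iff_gcd_eq_one]
    exact s.reduced
  obtain ⟨u, v, huv⟩ := hcop
  -- huv : u * s.num + v * s.den = 1
  set τ : QZ →+ QZ := v • rρ + u • ρ with hτ
  have hkey : (s.num : ℤ) • rρ = ((s.den:ℤ)) • ρ := by
    ext x
    exact key _
  have hbe : v * (s.den:ℤ) + u * s.num = 1 := by linarith [huv]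
  have hρτ : ρ = s.num • τ := by
    ext x
    have hky := key ((x : ℚ) : QZ)
    simp only [hτ, AddMonoidHom.smul_apply, AddMonoidHom.add_apply]
    calc ρ ((x:ℚ):QZ) = (1:ℤ) • ρ ((x:ℚ):QZ) := (one_smul ℤ _).symm
      _ = (v * (s.den:ℤ) + u * s.num) • ρ ((x:ℚ):QZ) := by rw [hbe]
      _ = v • (((s.den:ℤ)) • ρ ((x:ℚ):QZ)) + u • (s.num • ρ ((x:ℚ):QZ)) := by
          rw [add_smul, smul_smul, smul_smul]
      _ = v • (s.num • rρ ((x:ℚ):QZ)) + u • (s.num • ρ ((x:ℚ):QZ)) := by rw [hky]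
      _ = s.num • (v • rρ ((x:ℚ):QZ)) + s.num • (u • ρ ((x:ℚ):QZ)) := by
          rw [smul_comm v s.num, smul_comm u s.num]
      _ = s.num • (v • rρ ((x:ℚ):QZ) + u • ρ ((x:ℚ):QZ)) := (smul_add _ _ _).symm
  have hrρτ : rρ = ((s.den:ℤ)) • τ := by
    ext x
    have hky := key ((x : ℚ) : QZ)
    simp only [hτ, AddMonoidHom.smul_apply, AddMonoidHom.add_apply]
    calc rρ ((x:ℚ):QZ) = (1:ℤ) • rρ ((x:ℚ):QZ) := (one_smul ℤ _).symm
      _ = (v * (s.den:ℤ) + u * s.num) • rρ ((x:ℚ):QZ) := by rw [hbe]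
      _ = v • (((s.den:ℤ)) • rρ ((x:ℚ):QZ)) + u • (s.num • rρ ((x:ℚ):QZ)) := by
          rw [add_smul, smul_smul, smul_smul]
      _ = v • (((s.den:ℤ)) • rρ ((x:ℚ):QZ)) + u • (((s.den:ℤ)) • ρ ((x:ℚ):QZ)) := by rw [hky]
      _ = ((s.den:ℤ)) • (v • rρ ((x:ℚ):QZ)) + ((s.den:ℤ)) • (u • ρ ((x:ℚ):QZ)) := by
          rw [smul_comm v ((s.den:ℤ)), smul_comm u ((s.den:ℤ))]
      _ = ((s.den:ℤ)) • (v • rρ ((x:ℚ):QZ) + u • ρ ((x:ℚ):QZ)) := (smul_add _ _ _).symm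
  refine ⟨r, ρ, rρ, hr0, ⟨τ, ?_, ?_⟩, l₂, hl₂, ?_, ?_⟩
  · -- ρ = r.den • τ
    rw [hρτ, ← hrden, natCast_zsmul]
  · -- rρ = r.num • τ
    rw [hrρτ, hrnum]
  · -- ScaleRel l₂ (eta1 r rρ) ⟨zmultiples l₁, φ₁⟩
    have hgen : l₂ * ((r:ℝ))⁻¹ = l₁ := by rw [hrs, hs]; ring
    refine ⟨?_, ?_, ?_⟩
    · show zmultiples l₁ = (zmultiples (((r:ℚ):ℝ))⁻¹).map (AddMonoidHom.mulLeft l₂)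
      rw [map_zmult, hgen]
    · show zmultiples (((r:ℚ):ℝ))⁻¹ ≤ comap (AddMonoidHom.mulLeft l₂) (zmultiples l₁)
      rintro y ⟨n, rfl⟩
      refine AddSubgroup.mem_comap.mpr (mem_zmultiples_iff.mpr ⟨n, ?_⟩)
      simp only [AddMonoidHom.coe_mulLeft, zsmul_eq_mul]
      rw [← hgen]; ring
    · intro x
      obtain ⟨q, hq⟩ := QuotientAddGroup.mk_surjective (rρ x)
      show φ₁ x = QuotientAddGroup.map _ _ _ _ ((scaleHom _) (rρ x))
      rw [← hq, scaleHom_mk]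
      erw [QuotientAddGroup.map_mk]
      rw [← hrρ x, ← hq, scaleHom_mk]
      show QuotientAddGroup.mk (l₁ * q) = QuotientAddGroup.mk (l₂ * (((r:ℝ))⁻¹ * q))
      rw [show l₂ * (((r:ℝ))⁻¹ * (q:ℝ)) = (l₂ * ((r:ℝ))⁻¹) * q by ring, hgen]
  · -- ScaleRel l₂ (eta2 ρ) ⟨zmultiples l₂, φ₂⟩
    refine ⟨?_, ?_, ?_⟩
    · show zmultiples l₂ = (zmultiples (1:ℝ)).map (AddMonoidHom.mulLeft l₂)
      rw [map_zmult, mul_one]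
    · show zmultiples (1:ℝ) ≤ comap (AddMonoidHom.mulLeft l₂) (zmultiples l₂)
      rintro y ⟨n, rfl⟩
      refine AddSubgroup.mem_comap.mpr (mem_zmultiples_iff.mpr ⟨n, ?_⟩)
      simp only [AddMonoidHom.coe_mulLeft, zsmul_eq_mul]
      ring
    · intro x
      obtain ⟨p, hp⟩ := QuotientAddGroup.mk_surjective (ρ x)
      show φ₂ x = QuotientAddGroup.map _ _ _ _ ((scaleHom _) (ρ x))
      rw [← hp, scaleHom_mk]
      erw [QuotientAddGroup.map_mk]
      rw [← hρ x, ← hp, scaleHom_mk]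
      show QuotientAddGroup.mk (l₂ * p) = QuotientAddGroup.mk (l₂ * (1 * p))
      rw [one_mul]

/-- `η(r, ρ) = ((r⁻¹ℤ, r⁻¹(rρ)), (ℤ, ρ))` maps `G = {(r, ρ) ∈ ℚ₊ˣ × R : rρ ∈ R}` to pairs
of commensurable 1-dimensional `ℚ`-lattices, and induces a bijection from `G` onto the
quotient of the set of pairs of commensurable 1-dimensional `ℚ`-lattices by the scaling
action of `ℝ₊ˣ`. -/
theorem eta_bijection_commensurable_pairs_mod_scaling :
    (∀ (r : ℚ) (ρ rρ : QZ →+ QZ), 0 < r → IsRatSMul r ρ rρ →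
      IsQLat (eta1 r rρ) ∧ IsQLat (eta2 ρ) ∧ Commensurable1 (eta1 r rρ) (eta2 ρ)) ∧
    (∀ (r r' : ℚ) (ρ ρ' rρ rρ' : QZ →+ QZ), 0 < r → 0 < r' →
      IsRatSMul r ρ rρ → IsRatSMul r' ρ' rρ' →
      (∃ c : ℝ, 0 < c ∧ ScaleRel c (eta1 r rρ) (eta1 r' rρ') ∧
        ScaleRel c (eta2 ρ) (eta2 ρ')) →
      r = r' ∧ ρ = ρ') ∧
    (∀ L₁ L₂ : PreQLat, IsQLat L₁ → IsQLat L₂ → Commensurable1 L₁ L₂ →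
      ∃ (r : ℚ) (ρ rρ : QZ →+ QZ), 0 < r ∧ IsRatSMul r ρ rρ ∧
        ∃ c : ℝ, 0 < c ∧ ScaleRel c (eta1 r rρ) L₁ ∧ ScaleRel c (eta2 ρ) L₂) := by
  exact ⟨fun r ρ rρ hr h => part1 r ρ rρ hr h,
    fun r r' ρ ρ' rρ rρ' hr hr' _ _ hc => part2 r r' ρ ρ' rρ rρ' hr hr' hc,
    part3⟩
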